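/- Let Φ ∈ ℝ^{n×n} be a symmetric positive definite correlation matrix with largest and smallest eigenvalues λ₁ ≥ 1 ≥ λ_n > 0, and let σ ∈ ℝ^n have positive entries. With v_i = (1/n) e_i^⊤ Φ σ, v = (1/n²) σ^⊤ Φ σ, and γ_i = σ − (e_i^⊤ Φ σ) e_i, one has 1 − v_i²/v = (γ_i^⊤ Φ γ_i)/(σ^⊤ Φ σ) ≥ (λ_n/λ₁) · (∑_{j≠i} σ_j²)/‖σ‖₂² ≥ (λ_n/λ₁) · (1 − σ_i²/‖σ‖₂²). -/

import Mathlib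

open Matrix

/-- for a positive definite correlation matrix `Φ` with extreme eigenvalues
`lam₁ ≥ 1 ≥ lamₙ > 0` (expressed via the Rayleigh-quotient bounds `hRay`), and `σ` with positive
entries, setting `vᵢ = (1/n) eᵢᵀΦσ`, `v = (1/n²) σᵀΦσ`, `γᵢ = σ − (eᵢᵀΦσ)eᵢ`, one has
`1 − vᵢ²/v = γᵢᵀΦγᵢ/σᵀΦσ ≥ (lamₙ/lam₁)·(∑_{j≠i} σⱼ²)/‖σ‖² ≥ (lamₙ/lam₁)·(1 − σᵢ²/‖σ‖²)`. -/
theorem stmt10 {n : ℕ} (hn : 2 ≤ n) (Φ : Matrix (Fin n) (Fin n) ℝ)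
    (hΦ : Φ.PosDef) (hdiag : ∀ i, Φ i i = 1)
    (σ : Fin n → ℝ) (hσ : ∀ i, 0 < σ i)
    (lam₁ lamₙ : ℝ) (hlam₁ : 1 ≤ lam₁) (hlamₙ : 0 < lamₙ) (hlamₙ1 : lamₙ ≤ 1)
    (hRay : ∀ γ : Fin n → ℝ, lamₙ * (∑ j, γ j ^ 2) ≤ γ ⬝ᵥ Φ.mulVec γ ∧
      γ ⬝ᵥ Φ.mulVec γ ≤ lam₁ * (∑ j, γ j ^ 2)) :
    ∀ i : Fin n,
      let vi := (1 / (n : ℝ)) * Φ.mulVec σ i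
      let v := (1 / (n : ℝ) ^ 2) * (σ ⬝ᵥ Φ.mulVec σ)
      let γ := σ - Φ.mulVec σ i • (Pi.single i 1 : Fin n → ℝ)
      1 - vi ^ 2 / v = (γ ⬝ᵥ Φ.mulVec γ) / (σ ⬝ᵥ Φ.mulVec σ) ∧
      (lamₙ / lam₁) * ((∑ j ∈ Finset.univ \ {i}, σ j ^ 2) / ∑ j, σ j ^ 2) ≤
        (γ ⬝ᵥ Φ.mulVec γ) / (σ ⬝ᵥ Φ.mulVec σ) ∧
      (lamₙ / lam₁) * (1 - σ i ^ 2 / ∑ j, σ j ^ 2) ≤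
        (lamₙ / lam₁) * ((∑ j ∈ Finset.univ \ {i}, σ j ^ 2) / ∑ j, σ j ^ 2) := by
  intro i vi v γ
  have hsymm : Φᵀ = Φ := hΦ.1
  have hσne : σ ≠ 0 := fun h => (hσ ⟨0, by omega⟩).ne' (congrFun h _)
  set c : ℝ := Φ.mulVec σ i with hc
  set s : ℝ := σ ⬝ᵥ Φ.mulVec σ with hs
  have hspos : 0 < s := by have := hΦ.dotProduct_mulVec_pos hσne; simpa using this
  have h1 : σ ⬝ᵥ Φ.mulVec (Pi.single i 1) = c := by
    rw [dotProduct_mulVec, ← Matrix.mulVec_transpose, hsymm, dotProduct_single]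
    simp [mul_one]
    rfl
  have h2 : (Pi.single i 1 : Fin n → ℝ) ⬝ᵥ Φ.mulVec σ = c := by
    simp [single_dotProduct]
    rfl
  have h3 : (Pi.single i 1 : Fin n → ℝ) ⬝ᵥ Φ.mulVec (Pi.single i 1) = 1 := by
    simp [single_dotProduct, mulVec_single, hdiag]
  have hγΦγ : γ ⬝ᵥ Φ.mulVec γ = s - c ^ 2 := by
    show (σ - c • (Pi.single i 1 : Fin n → ℝ)) ⬝ᵥ
      Φ.mulVec (σ - c • (Pi.single i 1 : Fin n → ℝ)) = s - c ^ 2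
    rw [mulVec_sub, mulVec_smul, sub_dotProduct, dotProduct_sub, dotProduct_sub,
      smul_dotProduct, smul_dotProduct, dotProduct_smul, dotProduct_smul, h1, h2, h3]
    simp [smul_eq_mul]; ring
  have hnpos : (0:ℝ) < n := by exact_mod_cast Nat.lt_of_lt_of_le (by norm_num) hn
  have hN : (0:ℝ) < ∑ j, σ j ^ 2 := by
    apply Finset.sum_pos (fun j _ => pow_pos (hσ j) 2) ⟨⟨0, by omega⟩, Finset.mem_univ _⟩
  set N : ℝ := ∑ j, σ j ^ 2
  set S : ℝ := ∑ j ∈ Finset.univ \ {i}, σ j ^ 2 with hS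
  have hSN : S = N - σ i ^ 2 := by
    rw [hS, Finset.sum_sdiff_eq_sub (by simp)]
    simp
    rfl
  refine ⟨?_, ?_, ?_⟩
  · show 1 - ((1/(n:ℝ)) * c) ^ 2 / ((1/(n:ℝ)^2) * s) = (γ ⬝ᵥ Φ.mulVec γ) / s
    rw [hγΦγ]
    field_simp
  · have hγsq : S ≤ ∑ j, γ j ^ 2 := by
      rw [Finset.sum_eq_sum_sdiff_singleton_add (Finset.mem_univ i)]
      have he : ∑ j ∈ Finset.univ \ {i}, γ j ^ 2 = S := Finset.sum_congr rfl (fun j hj => by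
        simp only [Finset.mem_sdiff, Finset.mem_singleton] at hj
        simp [γ, Pi.single_eq_of_ne hj.2])
      rw [he]
      nlinarith [sq_nonneg (γ i)]
    have hlow : lamₙ * S ≤ γ ⬝ᵥ Φ.mulVec γ :=
      le_trans (by nlinarith) (hRay γ).1
    have hup : s ≤ lam₁ * N := (hRay σ).2
    have hγnn : 0 ≤ γ ⬝ᵥ Φ.mulVec γ := le_trans (by positivity) (hRay γ).1
    have : lamₙ * S / (lam₁ * N) ≤ (γ ⬝ᵥ Φ.mulVec γ) / s :=
      div_le_div₀ hγnn hlow hspos hup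
    calc lamₙ / lam₁ * (S / N) = lamₙ * S / (lam₁ * N) := by
          rw [div_mul_div_comm]
      _ ≤ _ := this
  · rw [hSN]
    have : (N - σ i ^ 2) / N = 1 - σ i ^ 2 / N := by field_simp
    rw [this]
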